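/- Suppose ℓ = 2 and f ≥ 2, and let n₁, n₂ be integers with n = n₁ − n₂. Then (all congruences modulo 2^f − 1): M(n₁,n₂) = 2^f + 4 if n ≡ 0 and f is even; M(n₁,n₂) = 2^f + 3 if n ≢ 0, 3 divides n, and f is even; M(n₁,n₂) = 2^f + 2 if n ≡ 0 and f is odd; M(n₁,n₂) = 2^f + 1 if n ≢ 0 and f is odd; and M(n₁,n₂) = 2^f if 3 does not divide n and f is even. -/

import Mathlib

namespace Stmt17

/-- The set `T(n₁,n₂)` (with `ℓ = 2`) of triples `(a,b,B)` with
`a ∈ {0,…,2^f−2}`, `b ∈ {1,2}^f`, `B ⊆ {0,…,f−1}`, with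
`n₁ ≡ a + ∑_{i∈B} b_i 2^i` and `n₂ ≡ a + ∑_{i∉B} b_i 2^i (mod 2^f−1)`. -/
def Tset2 (f : ℕ) (n₁ n₂ : ℤ) : Set (ℤ × (Fin f → ℤ) × Finset (Fin f)) :=
  {x | (0 ≤ x.1 ∧ x.1 ≤ (2 : ℤ) ^ f - 2) ∧
    (∀ i, 1 ≤ x.2.1 i ∧ x.2.1 i ≤ (2 : ℤ)) ∧
    Int.ModEq ((2 : ℤ) ^ f - 1) n₁
      (x.1 + ∑ i ∈ x.2.2, x.2.1 i * (2 : ℤ) ^ (i : ℕ)) ∧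
    Int.ModEq ((2 : ℤ) ^ f - 1) n₂
      (x.1 + ∑ i ∈ x.2.2ᶜ, x.2.1 i * (2 : ℤ) ^ (i : ℕ))}



lemma shape (M c x : ℤ) (hM : 0 < M) (h0 : 0 ≤ x) (h1 : x ≤ 3*M) :
    M ∣ (c - x) ↔ x = c % M ∨ x = c % M + M ∨ x = c % M + 2*M ∨ x = c % M + 3*M := by
  have hed := Int.mul_ediv_add_emod c M
  have hr0 : 0 ≤ c % M := Int.emod_nonneg c (by omega)
  have hr1 : c % M < M := Int.emod_lt_of_pos c hM
  constructor
  · rintro ⟨k, hk⟩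
    have h2 : x = c % M + M * (c / M - k) := by
      have : M * (c / M - k) = M * (c/M) - M * k := by ring
      omega
    set j := c / M - k with hj
    have hjl : 0 ≤ j := by
      by_contra hc
      push_neg at hc
      have : M * j ≤ M * (-1) := by
        apply mul_le_mul_of_nonneg_left (by omega) (by omega)
      omega
    have hju : j ≤ 3 := by
      by_contra hc
      push_neg at hc
      have : M * 4 ≤ M * j := by
        apply mul_le_mul_of_nonneg_left (by omega) (by omega)
      omega
    interval_cases j <;> omega
  · have hdd : M ∣ (c - c % M) := ⟨c / M, by omega⟩
    rintro (h|h|h|h)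
    · simpa [h] using hdd
    · have := hdd.sub (dvd_mul_left M 1)
      rw [show c - x = c - c % M - 1 * M by rw [h]; ring]; exact this
    · have := hdd.sub (dvd_mul_left M 2)
      rw [show c - x = c - c % M - 2 * M by rw [h]; ring]; exact this
    · have := hdd.sub (dvd_mul_left M 3)
      rw [show c - x = c - c % M - 3 * M by rw [h]; ring]; exact this

def binEquiv (f : ℕ) : Finset (Fin f) ≃ Fin (2 ^ f) :=
  (Equiv.trans
    { toFun := fun B i => if i ∈ B then (1 : Fin 2) else 0
      invFun := fun g => Finset.univ.filter (fun i => g i = 1)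
      left_inv := by
        intro B; ext i; simp only [Finset.mem_filter, Finset.mem_univ, true_and]
        by_cases h : i ∈ B <;> simp [h]
      right_inv := by
        intro g; funext i; simp only [Finset.mem_filter, Finset.mem_univ, true_and]
        by_cases h : g i = 1
        · simp [h]
        · have : g i = 0 := by omega
          simp [this]
      }
    finFunctionFinEquiv)

lemma binEquiv_val {f : ℕ} (B : Finset (Fin f)) :
    ((binEquiv f B : Fin (2^f)) : ℕ) = ∑ i ∈ B, 2 ^ (i : ℕ) := by
  show ((finFunctionFinEquiv fun i => if i ∈ B then (1 : Fin 2) else 0 : Fin (2^f)) : ℕ) = _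
  rw [finFunctionFinEquiv_apply]
  rw [← Finset.sum_filter_add_sum_filter_not Finset.univ (· ∈ B)]
  have h1 : Finset.univ.filter (· ∈ B) = B := by ext i; simp
  rw [h1]
  simp +contextual [Finset.sum_congr rfl]


variable {f : ℕ}

def Csel (b : Fin f → ℤ) (B : Finset (Fin f)) : Finset (Fin f) :=
  Finset.univ.filter (fun i => (i ∈ B ↔ b i = 2))

lemma sum_two_pow_univ (f : ℕ) : ∑ i : Fin f, (2:ℤ) ^ (i:ℕ) = 2 ^ f - 1 := by
  induction f with
  | zero => simp
  | succ n ih =>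
    rw [Fin.sum_univ_castSucc]
    simp only [Fin.coe_castSucc, Fin.val_last] at *
    rw [ih]; ring

lemma ident (b : Fin f → ℤ) (hb : ∀ i, 1 ≤ b i ∧ b i ≤ 2) (B : Finset (Fin f)) :
    (∑ i ∈ B, b i * 2 ^ (i:ℕ)) - (∑ i ∈ Bᶜ, b i * 2 ^ (i:ℕ))
      = 3 * (∑ i ∈ B, (2:ℤ) ^ (i:ℕ)) + (∑ i ∈ Csel b B, (2:ℤ) ^ (i:ℕ))
        - 2 * ((2:ℤ) ^ f - 1) := by
  have e1 : ∑ i ∈ B, b i * 2 ^ (i:ℕ)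
      = ∑ i ∈ B, ((2:ℤ) ^ (i:ℕ) + (if (i ∈ B ↔ b i = 2) then (2:ℤ) ^ (i:ℕ) else 0)) := by
    refine Finset.sum_congr rfl fun i hi => ?_
    rcases (by have := hb i; omega : b i = 1 ∨ b i = 2) with h | h <;>
      simp [h, hi] <;> ring
  have e2 : ∑ i ∈ Bᶜ, b i * 2 ^ (i:ℕ)
      = ∑ i ∈ Bᶜ, (2 * (2:ℤ) ^ (i:ℕ) - (if (i ∈ B ↔ b i = 2) then (2:ℤ) ^ (i:ℕ) else 0)) := by
    refine Finset.sum_congr rfl fun i hi => ?_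
    have hni : i ∉ B := by simpa using hi
    rcases (by have := hb i; omega : b i = 1 ∨ b i = 2) with h | h <;>
      simp [h, hni] <;> ring
  have e3 : ∑ i ∈ Csel b B, (2:ℤ) ^ (i:ℕ)
      = ∑ i ∈ B, (if (i ∈ B ↔ b i = 2) then (2:ℤ) ^ (i:ℕ) else 0)
        + ∑ i ∈ Bᶜ, (if (i ∈ B ↔ b i = 2) then (2:ℤ) ^ (i:ℕ) else 0) := by
    rw [Csel, Finset.sum_filter, Finset.sum_add_sum_compl]
  have e4 : ∑ i ∈ B, (2:ℤ) ^ (i:ℕ) + ∑ i ∈ Bᶜ, (2:ℤ) ^ (i:ℕ) = 2 ^ f - 1 := by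
    rw [Finset.sum_add_sum_compl, sum_two_pow_univ]
  have e5 : ∑ i ∈ Bᶜ, 2 * (2:ℤ) ^ (i:ℕ) = 2 * ∑ i ∈ Bᶜ, (2:ℤ) ^ (i:ℕ) :=
    (Finset.mul_sum _ _ _).symm
  rw [e1, e2, Finset.sum_add_distrib, Finset.sum_sub_distrib, e3, e5]
  linarith

lemma bfun_eq (b : Fin f → ℤ) (hb : ∀ i, 1 ≤ b i ∧ b i ≤ 2) (B : Finset (Fin f)) (i : Fin f) :
    (if (i ∈ B ↔ i ∈ Csel b B) then (2:ℤ) else 1) = b i := by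
  rcases (by have := hb i; omega : b i = 1 ∨ b i = 2) with h | h <;>
    by_cases hB : i ∈ B <;> simp [Csel, hB, h]

lemma Csel_bfun (B C : Finset (Fin f)) :
    Csel (fun i => if (i ∈ B ↔ i ∈ C) then (2:ℤ) else 1) B = C := by
  ext i
  simp only [Csel, Finset.mem_filter, Finset.mem_univ, true_and]
  by_cases hB : i ∈ B <;> by_cases hC : i ∈ C <;> simp [hB, hC]

lemma mod3 (f : ℕ) : ((2:ℤ)^f - 1) % 3 = if Even f then 0 else 1 := by
  induction f with
  | zero => simp
  | succ n ih =>
    have h : (2:ℤ)^(n+1) - 1 = 2*((2:ℤ)^n - 1) + 1 := by ring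
    rw [h]
    simp only [Nat.even_add_one]
    by_cases he : Even n <;> simp [he] at ih ⊢ <;> omega

lemma hMbig {f : ℕ} (hf : 2 ≤ f) : (3:ℤ) ≤ 2^f - 1 := by
  have : (2:ℤ)^2 ≤ 2^f := pow_le_pow_right₀ (by norm_num) hf
  norm_num at this; omega

lemma hcast {f : ℕ} : ((2^f : ℕ) : ℤ) = ((2:ℤ)^f - 1) + 1 := by push_cast; ring

-- inner count
lemma count_T {f : ℕ} (hf : 2 ≤ f) (c : ℤ) :
    (Finset.filter (fun T : ℕ => Int.ModEq ((2:ℤ)^f-1) c (T:ℤ)) (Finset.range (2^f))).card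
      = if ((2:ℤ)^f-1) ∣ c then 2 else 1 := by
  set M : ℤ := (2:ℤ)^f - 1 with hM
  have hM3 : (3:ℤ) ≤ M := hMbig hf
  have hc : ((2^f : ℕ) : ℤ) = M + 1 := hcast
  have hr0 : 0 ≤ c % M := Int.emod_nonneg c (by omega)
  have hr1 : c % M < M := Int.emod_lt_of_pos c (by omega)
  have key : ∀ T : ℕ, T < 2^f →
      (Int.ModEq M c (T:ℤ) ↔ ((T:ℤ) = c % M ∨ (T:ℤ) = c % M + M)) := by
    intro T hT
    have hTle : (T:ℤ) ≤ M := by omega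
    have h1 : Int.ModEq M c (T:ℤ) ↔ M ∣ (c - T) := by
      rw [Int.modEq_iff_dvd]
      constructor <;> intro h <;> [exact (dvd_sub_comm).mp h; exact (dvd_sub_comm).mp h]
    rw [h1, shape M c T (by omega) (by positivity) (by omega)]
    omega
  by_cases hdvd : M ∣ c
  · have hc0 : c % M = 0 := Int.emod_eq_zero_of_dvd hdvd
    have : (Finset.filter (fun T : ℕ => Int.ModEq M c (T:ℤ)) (Finset.range (2^f)))
        = {0, 2^f - 1} := by
      ext T
      simp only [Finset.mem_filter, Finset.mem_range, Finset.mem_insert, Finset.mem_singleton]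
      constructor
      · rintro ⟨hT, hmod⟩
        have := (key T hT).mp hmod
        omega
      · rintro (h|h) <;> subst h <;>
          refine ⟨by omega, (key _ (by omega)).mpr (by push_cast; omega)⟩
    rw [this, if_pos hdvd]
    rw [Finset.card_insert_of_notMem (by simp; omega), Finset.card_singleton]
  · have hc0 : c % M ≠ 0 := fun h => hdvd (Int.dvd_of_emod_eq_zero h)
    have : (Finset.filter (fun T : ℕ => Int.ModEq M c (T:ℤ)) (Finset.range (2^f)))
        = {(c % M).toNat} := by
      ext T
      simp only [Finset.mem_filter, Finset.mem_range, Finset.mem_singleton]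
      constructor
      · rintro ⟨hT, hmod⟩
        have := (key T hT).mp hmod
        omega
      · rintro h; subst h
        refine ⟨by omega, (key _ (by omega)).mpr (by push_cast; omega)⟩
    rw [this, if_neg hdvd, Finset.card_singleton]

set_option maxHeartbeats 2000000 in
lemma count_K {f : ℕ} (hf : 2 ≤ f) (r : ℤ) :
    (Finset.filter (fun S : ℕ => ((2:ℤ)^f-1) ∣ (r - 3*(S:ℤ))) (Finset.range (2^f))).card
      = (if ((2:ℤ)^f-1) ∣ r then 1 else 0)
        + (if Even f then (if (3:ℤ) ∣ r then 3 else 0) else 1) := by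
  set M : ℤ := (2:ℤ)^f - 1 with hMdef
  have hM3 : (3:ℤ) ≤ M := hMbig hf
  have hc : ((2^f : ℕ) : ℤ) = M + 1 := by rw [hMdef]; push_cast; ring
  have hr0 : 0 ≤ r % M := Int.emod_nonneg r (by omega)
  have hr1 : r % M < M := Int.emod_lt_of_pos r (by omega)
  have hed := Int.mul_ediv_add_emod r M
  have hm3 := mod3 f
  rw [← hMdef] at hm3
  have key : ∀ S : ℕ, S < 2^f →
      (M ∣ (r - 3*(S:ℤ)) ↔ (3*(S:ℤ) = r % M ∨ 3*(S:ℤ) = r % M + M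
        ∨ 3*(S:ℤ) = r % M + 2*M ∨ 3*(S:ℤ) = r % M + 3*M)) := by
    intro S hS
    exact shape M r (3*(S:ℤ)) (by omega) (by positivity) (by omega)
  have hkey2 : ∀ S : ℕ, (3*(S:ℤ) = r % M ∨ 3*(S:ℤ) = r % M + M
        ∨ 3*(S:ℤ) = r % M + 2*M ∨ 3*(S:ℤ) = r % M + 3*M) → S < 2^f → M ∣ (r - 3*(S:ℤ)) := by
    intro S h hS
    exact (key S hS).mpr h
  have hdvd0 : M ∣ r ↔ r % M = 0 :=
    ⟨Int.emod_eq_zero_of_dvd, Int.dvd_of_emod_eq_zero⟩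
  by_cases hev : Even f
  · -- M % 3 = 0
    have hm0 : M % 3 = 0 := by rw [hm3, if_pos hev]
    have h3M : (3:ℤ) ∣ M := Int.dvd_of_emod_eq_zero hm0
    have h3t : (3:ℤ) ∣ M * (r / M) := h3M.mul_right _
    obtain ⟨t, ht⟩ := h3t
    by_cases h3r : (3:ℤ) ∣ r
    · by_cases hMr : M ∣ r
      · have hr00 : r % M = 0 := hdvd0.mp hMr
        have hfe : (Finset.filter (fun S : ℕ => M ∣ (r - 3*(S:ℤ))) (Finset.range (2^f)))
            = {0, (M/3).toNat, ((2*M)/3).toNat, M.toNat} := by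
          ext S
          simp only [Finset.mem_filter, Finset.mem_range, Finset.mem_insert,
            Finset.mem_singleton]
          constructor
          · rintro ⟨hS, hdvd⟩
            have := (key S hS).mp hdvd
            omega
          · intro h
            have hS : S < 2^f := by omega
            exact ⟨hS, hkey2 S (by omega) hS⟩
        rw [hfe, if_pos hMr, if_pos hev, if_pos h3r]
        rw [Finset.card_insert_of_notMem (by simp; omega),
          Finset.card_insert_of_notMem (by simp; omega),
          Finset.card_insert_of_notMem (by simp; omega), Finset.card_singleton]
      · have hr00 : r % M ≠ 0 := fun h => hMr (hdvd0.mpr h)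
        have hfe : (Finset.filter (fun S : ℕ => M ∣ (r - 3*(S:ℤ))) (Finset.range (2^f)))
            = {((r % M)/3).toNat, ((r % M + M)/3).toNat, ((r % M + 2*M)/3).toNat} := by
          ext S
          simp only [Finset.mem_filter, Finset.mem_range, Finset.mem_insert,
            Finset.mem_singleton]
          constructor
          · rintro ⟨hS, hdvd⟩
            have := (key S hS).mp hdvd
            omega
          · intro h
            have hS : S < 2^f := by omega
            exact ⟨hS, hkey2 S (by omega) hS⟩
        rw [hfe, if_neg hMr, if_pos hev, if_pos h3r]
        rw [Finset.card_insert_of_notMem (by simp; omega),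
          Finset.card_insert_of_notMem (by simp; omega), Finset.card_singleton]
    · have hMr : ¬ M ∣ r := fun h => h3r (h3M.trans h)
      have hfe : (Finset.filter (fun S : ℕ => M ∣ (r - 3*(S:ℤ))) (Finset.range (2^f)))
          = ∅ := by
        ext S
        simp only [Finset.mem_filter, Finset.mem_range, Finset.notMem_empty, iff_false,
          not_and]
        intro hS hdvd
        have := (key S hS).mp hdvd
        omega
      rw [hfe, if_neg hMr, if_pos hev, if_neg h3r]
      simp
  · -- M % 3 = 1
    have hm1 : M % 3 = 1 := by rw [hm3, if_neg hev]
    by_cases hMr : M ∣ r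
    · have hr00 : r % M = 0 := hdvd0.mp hMr
      have hfe : (Finset.filter (fun S : ℕ => M ∣ (r - 3*(S:ℤ))) (Finset.range (2^f)))
          = {0, M.toNat} := by
        ext S
        simp only [Finset.mem_filter, Finset.mem_range, Finset.mem_insert,
          Finset.mem_singleton]
        constructor
        · rintro ⟨hS, hdvd⟩
          have := (key S hS).mp hdvd
          omega
        · intro h
          have hS : S < 2^f := by omega
          exact ⟨hS, hkey2 S (by omega) hS⟩
      rw [hfe, if_pos hMr, if_neg hev]
      rw [Finset.card_insert_of_notMem (by simp; omega), Finset.card_singleton]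
    · have hr00 : r % M ≠ 0 := fun h => hMr (hdvd0.mpr h)
      have hone : ∀ j : ℤ, 0 ≤ j → j ≤ 2 → 3 ∣ (r % M + j * M) →
          (Finset.filter (fun S : ℕ => M ∣ (r - 3*(S:ℤ))) (Finset.range (2^f)))
            = {((r % M + j * M)/3).toNat} := by
        intro j hj0 hj2 hjd
        interval_cases j <;>
        · ext S
          simp only [Finset.mem_filter, Finset.mem_range, Finset.mem_singleton]
          constructor
          · rintro ⟨hS, hdvd⟩
            have := (key S hS).mp hdvd
            omega
          · intro h
            have hS : S < 2^f := by omega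
            exact ⟨hS, hkey2 S (by omega) hS⟩
      have h3 : r % M % 3 = 0 ∨ r % M % 3 = 1 ∨ r % M % 3 = 2 := by omega
      rw [if_neg hMr, if_neg hev]
      rcases h3 with h3 | h3 | h3
      · rw [hone 0 (by omega) (by omega) (by omega), Finset.card_singleton]
      · rw [hone 2 (by omega) (by omega) (by omega), Finset.card_singleton]
      · rw [hone 1 (by omega) (by omega) (by omega), Finset.card_singleton]
lemma modeq_shift (M r s t : ℤ) : Int.ModEq M r (s + t) ↔ Int.ModEq M (r - s) t := by
  rw [Int.modEq_iff_dvd, Int.modEq_iff_dvd]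
  constructor <;> rintro ⟨k, hk⟩ <;> exact ⟨k, by linarith⟩

-- the (S,T) count
lemma count_R {f : ℕ} (hf : 2 ≤ f) (r : ℤ) :
    ((Finset.range (2^f) ×ˢ Finset.range (2^f)).filter
      (fun p : ℕ × ℕ => Int.ModEq ((2:ℤ)^f-1) r (3*(p.1:ℤ) + (p.2:ℤ)))).card
    = 2^f + ((if ((2:ℤ)^f-1) ∣ r then 1 else 0)
        + (if Even f then (if (3:ℤ) ∣ r then 3 else 0) else 1)) := by
  rw [Finset.card_filter, Finset.sum_product]
  have h1 : ∀ S : ℕ,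
      (∑ T ∈ Finset.range (2^f),
        if Int.ModEq ((2:ℤ)^f-1) r (3*(S:ℤ) + (T:ℤ)) then 1 else 0)
        = if ((2:ℤ)^f-1) ∣ (r - 3*(S:ℤ)) then 2 else 1 := by
    intro S
    rw [← Finset.card_filter]
    have heq : Finset.filter (fun T : ℕ => Int.ModEq ((2:ℤ)^f-1) r (3*(S:ℤ) + (T:ℤ)))
          (Finset.range (2^f))
        = Finset.filter (fun T : ℕ => Int.ModEq ((2:ℤ)^f-1) (r - 3*(S:ℤ)) (T:ℤ))
          (Finset.range (2^f)) :=
      Finset.filter_congr (fun T _ => modeq_shift ((2:ℤ)^f-1) r (3*(S:ℤ)) (T:ℤ))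
    rw [heq]
    exact count_T hf _
  simp only [h1]
  have h2 : ∀ S : ℕ, (if ((2:ℤ)^f-1) ∣ (r - 3*(S:ℤ)) then (2:ℕ) else 1)
      = 1 + (if ((2:ℤ)^f-1) ∣ (r - 3*(S:ℤ)) then 1 else 0) := by
    intro S; split <;> rfl
  simp only [h2]
  rw [Finset.sum_add_distrib, Finset.sum_const, Finset.card_range, smul_eq_mul, mul_one,
    Finset.sum_boole, count_K hf r]
  push_cast
  ring

-- step 2 : subsets-pairs count equals (S,T) count
lemma step2 {f : ℕ} (hf : 2 ≤ f) (r : ℤ) :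
    ((Finset.univ : Finset (Finset (Fin f) × Finset (Fin f))).filter
      (fun p : Finset (Fin f) × Finset (Fin f) => Int.ModEq ((2:ℤ)^f - 1) r
        (3*(∑ i ∈ p.1, (2:ℤ)^(i:ℕ)) + ∑ i ∈ p.2, (2:ℤ)^(i:ℕ)))).card
    = ((Finset.range (2^f) ×ˢ Finset.range (2^f)).filter
      (fun p : ℕ × ℕ => Int.ModEq ((2:ℤ)^f-1) r (3*(p.1:ℤ) + (p.2:ℤ)))).card := by
  apply Finset.card_bij
    (fun p _ => (((binEquiv f p.1 : Fin (2^f)) : ℕ), ((binEquiv f p.2 : Fin (2^f)) : ℕ)))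
  · rintro ⟨B, C⟩ hp
    simp only [Finset.mem_filter, Finset.mem_univ, true_and] at hp
    simp only [Finset.mem_filter, Finset.mem_product, Finset.mem_range]
    refine ⟨⟨(binEquiv f B).is_lt, (binEquiv f C).is_lt⟩, ?_⟩
    rw [binEquiv_val, binEquiv_val]
    push_cast
    exact hp
  · rintro ⟨B₁, C₁⟩ h₁ ⟨B₂, C₂⟩ h₂ h
    simp only [Prod.mk.injEq] at h
    have e1 : binEquiv f B₁ = binEquiv f B₂ := Fin.ext h.1
    have e2 : binEquiv f C₁ = binEquiv f C₂ := Fin.ext h.2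
    exact Prod.ext ((binEquiv f).injective e1) ((binEquiv f).injective e2)
  · rintro ⟨S, T⟩ hST
    simp only [Finset.mem_filter, Finset.mem_product, Finset.mem_range] at hST
    obtain ⟨⟨hS, hT⟩, hmod⟩ := hST
    refine ⟨((binEquiv f).symm ⟨S, hS⟩, (binEquiv f).symm ⟨T, hT⟩), ?_, ?_⟩
    · simp only [Finset.mem_filter, Finset.mem_univ, true_and]
      have eS : ((binEquiv f ((binEquiv f).symm ⟨S, hS⟩) : Fin (2^f)) : ℕ) = S := by
        rw [Equiv.apply_symm_apply]
      have eT : ((binEquiv f ((binEquiv f).symm ⟨T, hT⟩) : Fin (2^f)) : ℕ) = T := by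
        rw [Equiv.apply_symm_apply]
      rw [binEquiv_val] at eS eT
      have eS' : ((∑ i ∈ (binEquiv f).symm ⟨S, hS⟩, 2^(i:ℕ) : ℕ) : ℤ)
          = ∑ i ∈ (binEquiv f).symm ⟨S, hS⟩, (2:ℤ)^(i:ℕ) := by push_cast; rfl
      have eT' : ((∑ i ∈ (binEquiv f).symm ⟨T, hT⟩, 2^(i:ℕ) : ℕ) : ℤ)
          = ∑ i ∈ (binEquiv f).symm ⟨T, hT⟩, (2:ℤ)^(i:ℕ) := by push_cast; rfl
      rw [← eS', ← eT', eS, eT]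
      exact hmod
    · simp [Equiv.apply_symm_apply]

-- step 1 : ncard of Tset2 equals subsets-pairs count
lemma step1 {f : ℕ} (hf : 2 ≤ f) (n₁ n₂ : ℤ) :
    (Tset2 f n₁ n₂).ncard = ((Finset.univ : Finset (Finset (Fin f) × Finset (Fin f))).filter
      (fun p : Finset (Fin f) × Finset (Fin f) => Int.ModEq ((2:ℤ)^f - 1) (n₁ - n₂)
        (3*(∑ i ∈ p.1, (2:ℤ)^(i:ℕ)) + ∑ i ∈ p.2, (2:ℤ)^(i:ℕ)))).card := by
  have hM3 : (3:ℤ) ≤ (2:ℤ)^f - 1 := hMbig hf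
  let Q : Finset (Finset (Fin f) × Finset (Fin f)) :=
    ((Finset.univ : Finset (Finset (Fin f) × Finset (Fin f))).filter
      (fun p : Finset (Fin f) × Finset (Fin f) => Int.ModEq ((2:ℤ)^f - 1) (n₁ - n₂)
        (3*(∑ i ∈ p.1, (2:ℤ)^(i:ℕ)) + ∑ i ∈ p.2, (2:ℤ)^(i:ℕ))))
  let F : (ℤ × (Fin f → ℤ) × Finset (Fin f)) → Finset (Fin f) × Finset (Fin f) :=
    fun x => (x.2.2, Csel x.2.1 x.2.2)
  have hQmem : ∀ p : Finset (Fin f) × Finset (Fin f),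
      p ∈ Q ↔ Int.ModEq ((2:ℤ)^f - 1) (n₁ - n₂)
        (3*(∑ i ∈ p.1, (2:ℤ)^(i:ℕ)) + ∑ i ∈ p.2, (2:ℤ)^(i:ℕ)) := by
    intro p
    simp only [Q, Finset.mem_filter, Finset.mem_univ, true_and]
  have hmaps : ∀ x ∈ Tset2 f n₁ n₂, F x ∈ (↑Q : Set (Finset (Fin f) × Finset (Fin f))) := by
    rintro ⟨a, b, B⟩ ⟨⟨ha0, ha1⟩, hb, h1, h2⟩
    dsimp only at ha0 ha1 hb h1 h2
    rw [Finset.mem_coe, hQmem]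
    have hd := h1.sub h2
    have e : (a + ∑ i ∈ B, b i * 2^(i:ℕ)) - (a + ∑ i ∈ Bᶜ, b i * 2^(i:ℕ))
        = (3 * (∑ i ∈ B, (2:ℤ)^(i:ℕ)) + (∑ i ∈ Csel b B, (2:ℤ)^(i:ℕ)))
          - 2 * ((2:ℤ)^f - 1) := by
      have := ident b hb B
      omega
    rw [e] at hd
    have hshift : Int.ModEq ((2:ℤ)^f - 1)
        ((3 * (∑ i ∈ B, (2:ℤ)^(i:ℕ)) + (∑ i ∈ Csel b B, (2:ℤ)^(i:ℕ))) - 2 * ((2:ℤ)^f - 1))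
        (3 * (∑ i ∈ B, (2:ℤ)^(i:ℕ)) + (∑ i ∈ Csel b B, (2:ℤ)^(i:ℕ))) := by
      rw [Int.modEq_iff_dvd]
      exact ⟨2, by ring⟩
    exact hd.trans hshift
  have hinj : Set.InjOn F (Tset2 f n₁ n₂) := by
    rintro ⟨a₁, b₁, B₁⟩ hx ⟨a₂, b₂, B₂⟩ hy hF
    obtain ⟨⟨ha10, ha11⟩, hb1, h11, h12⟩ := hx
    obtain ⟨⟨ha20, ha21⟩, hb2, h21, h22⟩ := hy
    dsimp only at ha10 ha11 hb1 h11 h12 ha20 ha21 hb2 h21 h22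
    have hBeq : B₁ = B₂ := congrArg Prod.fst hF
    have hCeq : Csel b₁ B₁ = Csel b₂ B₂ := congrArg Prod.snd hF
    have hbeq : b₁ = b₂ := by
      funext i
      have hmem : (i ∈ B₁ ↔ b₁ i = 2) ↔ (i ∈ B₁ ↔ b₂ i = 2) := by
        have : i ∈ Csel b₁ B₁ ↔ i ∈ Csel b₂ B₂ := by rw [hCeq]
        simp only [Csel, Finset.mem_filter, Finset.mem_univ, true_and, ← hBeq] at this
        tauto
      have h1i := hb1 i
      have h2i := hb2 i
      by_cases hB : i ∈ B₁ <;> simp [hB] at hmem <;> omega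
    have haeq : a₁ = a₂ := by
      rw [← hBeq, ← hbeq] at h21
      have hmm := (h11.symm.trans h21)
      obtain ⟨k, hk⟩ := hmm.dvd
      have hiden : a₂ - a₁ = ((2:ℤ)^f - 1) * k := by linarith
      have hk0 : k = 0 := by
        by_contra hkk
        rcases lt_or_gt_of_ne hkk with h | h
        · have : ((2:ℤ)^f - 1) * k ≤ ((2:ℤ)^f - 1) * (-1) :=
            mul_le_mul_of_nonneg_left (by omega) (by omega)
          omega
        · have : ((2:ℤ)^f - 1) * 1 ≤ ((2:ℤ)^f - 1) * k :=
            mul_le_mul_of_nonneg_left (by omega) (by omega)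
          omega
      rw [hk0, mul_zero] at hiden
      omega
    simp only [haeq, hbeq, hBeq]
  have hsurj : Set.SurjOn F (Tset2 f n₁ n₂)
      (↑Q : Set (Finset (Fin f) × Finset (Fin f))) := by
    rintro ⟨B, C⟩ hp
    rw [Finset.mem_coe, hQmem] at hp
    dsimp only at hp
    set b : Fin f → ℤ := fun i => if (i ∈ B ↔ i ∈ C) then (2:ℤ) else 1 with hbdef
    have hb : ∀ i, 1 ≤ b i ∧ b i ≤ 2 := by
      intro i; rw [hbdef]; dsimp only; split <;> norm_num
    set a : ℤ := (n₁ - ∑ i ∈ B, b i * 2^(i:ℕ)) % ((2:ℤ)^f - 1) with hadef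
    have ha0 : 0 ≤ a := Int.emod_nonneg _ (by omega)
    have ha1 : a < (2:ℤ)^f - 1 := Int.emod_lt_of_pos _ (by omega)
    have haM : Int.ModEq ((2:ℤ)^f - 1) a (n₁ - ∑ i ∈ B, b i * 2^(i:ℕ)) := by
      rw [hadef]
      exact (Int.emod_emod_of_dvd _ dvd_rfl)
    have hCsel : Csel b B = C := Csel_bfun B C
    refine ⟨(a, b, B), ⟨⟨ha0, by omega⟩, hb, ?_, ?_⟩, ?_⟩
    · have h := haM.add_right (∑ i ∈ B, b i * 2^(i:ℕ))
      rw [sub_add_cancel] at h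
      exact h.symm
    · have hid := ident b hb B
      rw [hCsel] at hid
      have hstep : Int.ModEq ((2:ℤ)^f - 1) (a + ∑ i ∈ Bᶜ, b i * 2^(i:ℕ))
          (n₁ - ∑ i ∈ B, b i * 2^(i:ℕ) + ∑ i ∈ Bᶜ, b i * 2^(i:ℕ)) :=
        haM.add_right _
      have e : n₁ - ∑ i ∈ B, b i * 2^(i:ℕ) + ∑ i ∈ Bᶜ, b i * 2^(i:ℕ)
          = n₁ - (3*(∑ i ∈ B, (2:ℤ)^(i:ℕ)) + ∑ i ∈ C, (2:ℤ)^(i:ℕ))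
            + 2 * ((2:ℤ)^f - 1) := by omega
      rw [e] at hstep
      have hstep2 : Int.ModEq ((2:ℤ)^f - 1)
          (n₁ - (3*(∑ i ∈ B, (2:ℤ)^(i:ℕ)) + ∑ i ∈ C, (2:ℤ)^(i:ℕ)) + 2 * ((2:ℤ)^f - 1))
          (n₁ - (n₁ - n₂)) := by
        have hA : Int.ModEq ((2:ℤ)^f - 1)
            (n₁ - (3*(∑ i ∈ B, (2:ℤ)^(i:ℕ)) + ∑ i ∈ C, (2:ℤ)^(i:ℕ)))
            (n₁ - (n₁ - n₂)) := (Int.ModEq.refl n₁).sub hp.symm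
        have hB2 : Int.ModEq ((2:ℤ)^f - 1)
            (n₁ - (3*(∑ i ∈ B, (2:ℤ)^(i:ℕ)) + ∑ i ∈ C, (2:ℤ)^(i:ℕ)) + 2 * ((2:ℤ)^f - 1))
            (n₁ - (3*(∑ i ∈ B, (2:ℤ)^(i:ℕ)) + ∑ i ∈ C, (2:ℤ)^(i:ℕ))) := by
          rw [Int.modEq_iff_dvd]; exact ⟨-2, by ring⟩
        exact hB2.trans hA
      have hfin := hstep.trans hstep2
      rw [show n₁ - (n₁ - n₂) = n₂ from by ring] at hfin
      exact hfin.symm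
    · show (B, Csel b B) = (B, C)
      rw [hCsel]
  have hbij : Set.BijOn F (Tset2 f n₁ n₂) ↑Q := ⟨hmaps, hinj, hsurj⟩
  have : (Tset2 f n₁ n₂).ncard = Q.card := by
    rw [← Set.ncard_coe_finset, ← hbij.image_eq, Set.ncard_image_of_injOn hinj]
  exact this


/-- Suppose `ℓ = 2` and `f ≥ 2`, and let `n = n₁ − n₂`.  Then (congruences
modulo `2^f − 1`): `M = 2^f + 4` if `n ≡ 0` and `f` even; `M = 2^f + 3` if
`n ≢ 0`, `3 ∣ n` and `f` even; `M = 2^f + 2` if `n ≡ 0` and `f` odd;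
`M = 2^f + 1` if `n ≢ 0` and `f` odd; `M = 2^f` if `3 ∤ n` and `f` even. -/
theorem stmt17 (f : ℕ) (hf : 2 ≤ f) (n₁ n₂ : ℤ) :
    (Int.ModEq ((2 : ℤ) ^ f - 1) (n₁ - n₂) 0 → Even f →
      (Tset2 f n₁ n₂).ncard = 2 ^ f + 4) ∧
    (¬ Int.ModEq ((2 : ℤ) ^ f - 1) (n₁ - n₂) 0 → (3 : ℤ) ∣ (n₁ - n₂) → Even f →
      (Tset2 f n₁ n₂).ncard = 2 ^ f + 3) ∧
    (Int.ModEq ((2 : ℤ) ^ f - 1) (n₁ - n₂) 0 → Odd f →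
      (Tset2 f n₁ n₂).ncard = 2 ^ f + 2) ∧
    (¬ Int.ModEq ((2 : ℤ) ^ f - 1) (n₁ - n₂) 0 → Odd f →
      (Tset2 f n₁ n₂).ncard = 2 ^ f + 1) ∧
    (¬ (3 : ℤ) ∣ (n₁ - n₂) → Even f →
      (Tset2 f n₁ n₂).ncard = 2 ^ f) := by
  have hdvd : Int.ModEq ((2:ℤ)^f - 1) (n₁ - n₂) 0 ↔ ((2:ℤ)^f - 1) ∣ (n₁ - n₂) := by
    rw [Int.modEq_zero_iff_dvd]
  have hmain : (Tset2 f n₁ n₂).ncard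
      = 2^f + ((if ((2:ℤ)^f-1) ∣ (n₁ - n₂) then 1 else 0)
        + (if Even f then (if (3:ℤ) ∣ (n₁ - n₂) then 3 else 0) else 1)) := by
    rw [step1 hf, step2 hf, count_R hf]
  have h3M : Even f → (3:ℤ) ∣ ((2:ℤ)^f - 1) := by
    intro he
    have := mod3 f
    rw [if_pos he] at this
    exact Int.dvd_of_emod_eq_zero this
  refine ⟨?_, ?_, ?_, ?_, ?_⟩
  · intro h1 h2
    have hd := hdvd.mp h1
    have h3 : (3:ℤ) ∣ (n₁ - n₂) := (h3M h2).trans hd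
    rw [hmain, if_pos hd, if_pos h2, if_pos h3]
  · intro h1 h3 h2
    rw [hmain, if_neg (fun h => h1 (hdvd.mpr h)), if_pos h2, if_pos h3]
  · intro h1 h2
    rw [hmain, if_pos (hdvd.mp h1), if_neg (Nat.not_even_iff_odd.mpr h2)]
  · intro h1 h2
    rw [hmain, if_neg (fun h => h1 (hdvd.mpr h)), if_neg (Nat.not_even_iff_odd.mpr h2)]
  · intro h3 h2
    have hMr : ¬ ((2:ℤ)^f - 1) ∣ (n₁ - n₂) := fun h => h3 ((h3M h2).trans h)
    rw [hmain, if_neg hMr, if_pos h2, if_neg h3]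
    norm_num


end Stmt17
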